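/- Let F_q be a finite field with q ≥ 2s+1 and let ω be a primitive element. Set λ_i = ω^i for i ∈ [2s]. Then, viewing the 2s×2s matrix M(γ) with block structure [ (V_0 ⊗ 1^{(2)}) ⊙ K^{(2)}(λ_0,…,λ_{s-1}) | (V_1 ⊗ 1^{(2)}) ⊙ K^{(2)}(λ_s,…,λ_{2s-1}) ] — where V_0 has γ on the diagonal and 1 off-diagonal, V_1 = I_s, K^{(2)}(x_0,…,x_{s-1}) is the s×s block matrix with every block row equal to (L^{(2)}(x_0),…,L^{(2)}(x_{s-1})), L^{(2)}(x) = (1, x)^T, and ⊙ the Hadamard product after expanding each scalar of V_b to a 2×1 block — the determinant f(γ) = det M(γ) is a nonzero polynomial in γ of degree at most s. -/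

import Mathlib

open Polynomial

/-- The `2s × 2s` matrix `M(γ) = [ (V₀ ⊗ 1⁽²⁾) ⊙ K⁽²⁾(λ_0,…,λ_{s-1}) |
(V₁ ⊗ 1⁽²⁾) ⊙ K⁽²⁾(λ_s,…,λ_{2s-1}) ]` with `λ_i = ω^i`, viewed over `F[γ]`
(the variable `γ` is `X`).  Rows are indexed by (block row `i`, inner index `c`),
columns by (column `j` within a half, half `b`).  Explicitly the entry is
`(if i = j then γ else 1)·λ_j^c` on the left half and `(if i = j then λ_{s+j}^c else 0)`
on the right half. -/
noncomputable def Mmat {F : Type*} [Field F] (s : ℕ) (ω : F) :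
    Matrix (Fin s × Fin 2) (Fin s × Fin 2) (Polynomial F) :=
  Matrix.of fun p q =>
    if q.2 = 0 then
      (if p.1 = q.1 then X else 1) * C ((ω ^ (q.1 : ℕ)) ^ (p.2 : ℕ))
    else
      (if p.1 = q.1 then C ((ω ^ (s + (q.1 : ℕ))) ^ (p.2 : ℕ)) else 0)

lemma Mmat_apply0 {F : Type*} [Field F] (s : ℕ) (ω : F) (p : Fin s × Fin 2) (j : Fin s) :
    Mmat s ω p (j, 0) = (if p.1 = j then X else 1) * C ((ω ^ (j : ℕ)) ^ (p.2 : ℕ)) := by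
  simp [Mmat]

lemma Mmat_apply1 {F : Type*} [Field F] (s : ℕ) (ω : F) (p : Fin s × Fin 2) (j : Fin s) :
    Mmat s ω p (j, 1) = (if p.1 = j then C ((ω ^ (s + (j : ℕ))) ^ (p.2 : ℕ)) else 0) := by
  simp [Mmat]

/-- The constant matrix whose determinant is the coefficient of `γ^s` in `det (Mmat s ω)`. -/
def Nmat {F : Type*} [Field F] (s : ℕ) (ω : F) :
    Matrix (Fin s × Fin 2) (Fin s × Fin 2) F :=
  Matrix.of fun p q =>
    if p.1 = q.1 then (if q.2 = 0 then ω ^ (q.1 : ℕ) else ω ^ (s + (q.1 : ℕ))) ^ (p.2 : ℕ)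
    else 0

lemma Nmat_apply0 {F : Type*} [Field F] (s : ℕ) (ω : F) (p : Fin s × Fin 2) (j : Fin s) :
    Nmat s ω p (j, 0) = (if p.1 = j then (ω ^ (j : ℕ)) ^ (p.2 : ℕ) else 0) := by
  simp [Nmat]

lemma Nmat_apply1 {F : Type*} [Field F] (s : ℕ) (ω : F) (p : Fin s × Fin 2) (j : Fin s) :
    Nmat s ω p (j, 1) = (if p.1 = j then (ω ^ (s + (j : ℕ))) ^ (p.2 : ℕ) else 0) := by
  simp [Nmat]

/-- `Nmat` is block diagonal (after swapping the product factors). -/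
lemma Nmat_eq_blockDiagonal {F : Type*} [Field F] (s : ℕ) (ω : F) :
    Nmat s ω = (Matrix.blockDiagonal fun j : Fin s =>
        Matrix.of fun c b : Fin 2 =>
          (if b = 0 then ω ^ (j : ℕ) else ω ^ (s + (j : ℕ))) ^ (c : ℕ)).submatrix
        (Equiv.prodComm (Fin s) (Fin 2)) (Equiv.prodComm (Fin s) (Fin 2)) := by
  ext ⟨i, c⟩ ⟨j, b⟩
  by_cases h : i = j
  · subst h
    simp [Nmat, Matrix.blockDiagonal_apply]
  · simp [Nmat, Matrix.blockDiagonal_apply, h]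

lemma coeff_det_Mmat {F : Type*} [Field F] (s : ℕ) (ω : F) :
    ((Mmat s ω).det).coeff s = (Nmat s ω).det := by
  rw [Matrix.det_apply', Matrix.det_apply', finset_sum_coeff]
  refine Finset.sum_congr rfl fun σ _ => ?_
  rw [← C_eq_intCast, coeff_C_mul]
  congr 1
  have hsplit : (∏ q : Fin s × Fin 2, Mmat s ω (σ q) q)
      = (∏ j : Fin s, Mmat s ω (σ (j, 0)) (j, 0)) *
        (∏ j : Fin s, Mmat s ω (σ (j, 1)) (j, 1)) := by
    rw [Fintype.prod_prod_type]
    simp_rw [Fin.prod_univ_two]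
    rw [Finset.prod_mul_distrib]
  have hsplitN : (∏ q : Fin s × Fin 2, Nmat s ω (σ q) q)
      = (∏ j : Fin s, Nmat s ω (σ (j, 0)) (j, 0)) *
        (∏ j : Fin s, Nmat s ω (σ (j, 1)) (j, 1)) := by
    rw [Fintype.prod_prod_type]
    simp_rw [Fin.prod_univ_two]
    rw [Finset.prod_mul_distrib]
  have hright : (∏ j : Fin s, Mmat s ω (σ (j, 1)) (j, 1))
      = C (∏ j : Fin s, Nmat s ω (σ (j, 1)) (j, 1)) := by
    rw [map_prod]
    refine Finset.prod_congr rfl fun j _ => ?_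
    rw [Mmat_apply1, Nmat_apply1, apply_ite C, map_zero]
  have hleft : (∏ j : Fin s, Mmat s ω (σ (j, 0)) (j, 0)).coeff s
      = ∏ j : Fin s, Nmat s ω (σ (j, 0)) (j, 0) := by
    have h := coeff_prod_of_natDegree_le (s := Finset.univ)
      (f := fun j : Fin s => Mmat s ω (σ (j, 0)) (j, 0)) 1 ?_
    · rw [Finset.card_univ, Fintype.card_fin, mul_one] at h
      rw [h]
      refine Finset.prod_congr rfl fun j _ => ?_
      rw [Mmat_apply0, Nmat_apply0]
      split_ifs with hij
      · rw [mul_comm, coeff_C_mul, coeff_X_one, mul_one]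
      · rw [one_mul, coeff_C, if_neg one_ne_zero]
    · intro j _
      show (Mmat s ω (σ (j, 0)) (j, 0)).natDegree ≤ 1
      rw [Mmat_apply0]
      split_ifs
      · exact le_trans natDegree_mul_le (by simp)
      · rw [one_mul]; simp
  rw [hsplit, hsplitN, hright, coeff_mul_C, hleft]

theorem natDegree_det_Mmat_le {F : Type*} [Field F] (s : ℕ) (ω : F) :
    (Mmat s ω).det.natDegree ≤ s := by
  rw [Matrix.det_apply']
  refine natDegree_sum_le_of_forall_le _ _ fun σ _ => ?_
  refine le_trans natDegree_mul_le ?_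
  rw [natDegree_intCast, zero_add]
  refine le_trans (natDegree_prod_le Finset.univ (fun p : Fin s × Fin 2 => Mmat s ω (σ p) p)) ?_
  have hb : ∀ p : Fin s × Fin 2, (Mmat s ω (σ p) p).natDegree ≤ if p.2 = 0 then 1 else 0 := by
    rintro ⟨j, b⟩
    by_cases hb : b = 0
    · subst hb
      simp only [if_pos rfl]
      rw [Mmat_apply0]
      split_ifs
      · exact le_trans natDegree_mul_le (by simp)
      · rw [one_mul]; simp
    · rw [Fin.eq_one_of_ne_zero b hb]
      simp only [if_neg (show ¬((j, (1 : Fin 2)).2 = 0) by simp)]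
      rw [Mmat_apply1]
      split_ifs <;> simp
  refine le_trans (Finset.sum_le_sum fun p _ => hb p) ?_
  rw [Fintype.sum_prod_type]
  simp

theorem stmt10 {F : Type*} [Field F] [Fintype F] (s : ℕ) (hs : 0 < s)
    (hq : 2 * s + 1 ≤ Fintype.card F) (ω : F)
    (hω : orderOf ω = Fintype.card F - 1) :
    (Mmat s ω).det ≠ 0 ∧ (Mmat s ω).det.natDegree ≤ s := by
  have hω0 : ω ≠ 0 := by
    intro h
    subst h
    have h1 : (0 : F) ^ orderOf (0 : F) = 1 := pow_orderOf_eq_one 0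
    rw [hω, zero_pow (by omega : Fintype.card F - 1 ≠ 0)] at h1
    exact zero_ne_one h1
  have hkey : ∀ j : Fin s, ω ^ (s + (j : ℕ)) - ω ^ (j : ℕ) ≠ 0 := by
    intro j
    rw [sub_ne_zero]
    intro h
    rw [pow_add] at h
    have h2 : ω ^ s * ω ^ (j : ℕ) = 1 * ω ^ (j : ℕ) := by rw [one_mul]; exact h
    have h3 : ω ^ s = 1 := mul_right_cancel₀ (pow_ne_zero _ hω0) h2
    have h4 : orderOf ω ∣ s := orderOf_dvd_of_pow_eq_one h3
    have h5 : orderOf ω ≤ s := Nat.le_of_dvd hs h4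
    omega
  have hdetN : (Nmat s ω).det ≠ 0 := by
    rw [Nmat_eq_blockDiagonal, Matrix.det_submatrix_equiv_self, Matrix.det_blockDiagonal]
    refine Finset.prod_ne_zero_iff.mpr fun j _ => ?_
    rw [Matrix.det_fin_two]
    simpa using hkey j
  refine ⟨?_, natDegree_det_Mmat_le s ω⟩
  intro h
  rw [← coeff_det_Mmat s ω, h, coeff_zero] at hdetN
  exact hdetN rfl
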